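/- arXiv:2509.14193 — 4 statements merged into one kernel-verified Lean document; each statement's English description precedes it below -/
import Mathlib

section
/- Let G be a signed graph with edge connectivity κ_e(G) and frustration index φ(G), and let 𝒢 be its Gremban expansion. Then the edge connectivity of 𝒢 satisfies κ_e(𝒢) ≤ 2·min{κ_e(G), φ(G)}. -/
/-- A signed graph: a simple graph together with a symmetric `±1`-valued sign function
on its edges. -/
structure SignedGraph (V : Type*) where
  G : SimpleGraph V
  sign : V → V → ℤ
  sign_symm : ∀ u v, sign u v = sign v u
  sign_pm : ∀ u v, G.Adj u v → sign u v = 1 ∨ sign u v = -1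

namespace SignedGraph

variable {V : Type*} (S : SignedGraph V)

/-- The Gremban expansion of a signed graph: each vertex `v` is doubled into the two
polarities `(v, true)` (positive) and `(v, false)` (negative); a positive edge lifts to
two edges between equal polarities, and a negative edge to two edges between opposite
polarities. -/
def gremban : SimpleGraph (V × Bool) where
  Adj x y := S.G.Adj x.1 y.1 ∧ ((x.2 = y.2) ↔ S.sign x.1 y.1 = 1)
  symm := by
    constructor
    rintro ⟨u, a⟩ ⟨v, b⟩ ⟨h, hs⟩
    refine ⟨h.symm, ?_⟩
    rw [S.sign_symm v u, eq_comm]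
    exact hs
  loopless := by
    constructor
    rintro ⟨u, a⟩ ⟨h, _⟩
    exact S.G.irrefl h

/-- The Gremban involution, swapping the two polarities of every vertex. -/
def eta : V × Bool → V × Bool := fun x => (x.1, !x.2)

end SignedGraph

open SignedGraph

/-- The set of edges of `G` with one endpoint in `A` and the other in `B`. -/
def cutEdges {V : Type*} (G : SimpleGraph V) (A B : Set V) : Set (Sym2 V) :=
  {e | e ∈ G.edgeSet ∧ ∃ u v, e = s(u, v) ∧ u ∈ A ∧ v ∈ B}

/-- The edge connectivity of a graph: the minimum size of a cut-set over all
bipartitions of the vertex set into two nonempty parts. -/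
noncomputable def edgeConn {V : Type*} (G : SimpleGraph V) : ℕ :=
  sInf {n | ∃ A : Set V, A.Nonempty ∧ Aᶜ.Nonempty ∧ (cutEdges G A Aᶜ).ncard = n}

/-- The frustration set of a switching function `θ`: the edges that are negative after
switching by `θ`. -/
def frustEdges {V : Type*} (S : SignedGraph V) (θ : V → ℤ) : Set (Sym2 V) :=
  {e | e ∈ S.G.edgeSet ∧ ∃ u v, e = s(u, v) ∧ θ u * θ v * S.sign u v = -1}

/-- The frustration index of a signed graph: the minimum size of a frustration set over
all switching functions `θ : V → {±1}`. -/
noncomputable def frustIndex {V : Type*} (S : SignedGraph V) : ℕ :=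
  sInf {n | ∃ θ : V → ℤ, (∀ v, θ v = 1 ∨ θ v = -1) ∧ (frustEdges S θ).ncard = n}

section Aux

variable {V : Type*}

lemma ncard_le_two_mul {α β : Type*} (s : Set α) (t : Set β) (hs : s.Finite) (ht : t.Finite)
    (f : α → β) (hmap : ∀ a ∈ s, f a ∈ t)
    (hfib : ∀ b : β, {a ∈ s | f a = b}.ncard ≤ 2) : s.ncard ≤ 2 * t.ncard := by
  classical
  rw [Set.ncard_eq_toFinset_card _ hs, Set.ncard_eq_toFinset_card _ ht]
  refine Finset.card_le_mul_card_image_of_maps_to (f := f) ?_ 2 ?_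
  · intro a ha
    rw [Set.Finite.mem_toFinset] at ha ⊢
    exact hmap a ha
  · intro b _
    calc ({a ∈ hs.toFinset | f a = b} : Finset α).card
        = ({a ∈ s | f a = b} : Set α).ncard := by
          rw [← Set.ncard_coe_finset]
          congr 1
          ext a
          simp
      _ ≤ 2 := hfib b

lemma fiber_ncard_le (S : SignedGraph V) (u v : V) (P : Set (Sym2 (V × Bool)))
    (hP : ∀ f ∈ P, f ∈ S.gremban.edgeSet ∧ Sym2.map Prod.fst f = s(u, v)) :
    P.ncard ≤ 2 := by
  obtain ⟨c, hc⟩ : ∃ c : Bool, (S.sign u v = 1 ↔ c = true) := by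
    by_cases h : S.sign u v = 1
    · exact ⟨true, by simp [h]⟩
    · exact ⟨false, by simp [h]⟩
  have hsub : P ⊆ {s((u, true), (v, c)), s((u, false), (v, !c))} := by
    intro f hf
    obtain ⟨he, hm⟩ := hP f hf
    induction f using Sym2.ind with
    | _ x y =>
      obtain ⟨x1, a⟩ := x
      obtain ⟨y1, b⟩ := y
      rw [SimpleGraph.mem_edgeSet] at he
      obtain ⟨hadj, hsig⟩ := he
      simp only [Sym2.map_pair_eq] at hm
      rw [Sym2.eq_iff] at hm
      simp only [Set.mem_insert_iff, Set.mem_singleton_iff]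
      rcases hm with ⟨h1, h2⟩ | ⟨h1, h2⟩
      · subst h1; subst h2
        rw [hc] at hsig
        cases a <;> cases b <;> cases c <;> simp_all [Sym2.eq_iff]
      · subst h1; subst h2
        rw [S.sign_symm x1 y1] at hsig
        rw [hc] at hsig
        cases a <;> cases b <;> cases c <;> simp_all [Sym2.eq_iff]
  calc P.ncard ≤ ({s((u, true), (v, c)), s((u, false), (v, !c))} : Set (Sym2 (V × Bool))).ncard :=
        Set.ncard_le_ncard hsub ((Set.finite_singleton _).insert _)
    _ ≤ 2 := (Set.ncard_insert_le _ _).trans (by simp)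

lemma edgeConn_gremban_le [Fintype V] (S : SignedGraph V) (A' : Set (V × Bool))
    (hA : A'.Nonempty) (hAc : A'ᶜ.Nonempty) (T : Set (Sym2 V))
    (hmap : ∀ f ∈ cutEdges S.gremban A' A'ᶜ, Sym2.map Prod.fst f ∈ T) :
    edgeConn S.gremban ≤ 2 * T.ncard := by
  have h1 : edgeConn S.gremban ≤ (cutEdges S.gremban A' A'ᶜ).ncard :=
    Nat.sInf_le ⟨A', hA, hAc, rfl⟩
  refine h1.trans (ncard_le_two_mul _ _ (Set.toFinite _) (Set.toFinite _) _ hmap fun e => ?_)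
  induction e using Sym2.ind with
  | _ u v => exact fiber_ncard_le S u v _ (fun f hf => ⟨hf.1.1, hf.2⟩)

lemma boundA [Fintype V] (S : SignedGraph V) (A : Set V) (hA : A.Nonempty)
    (hAc : Aᶜ.Nonempty) :
    edgeConn S.gremban ≤ 2 * (cutEdges S.G A Aᶜ).ncard := by
  obtain ⟨a, ha⟩ := hA
  obtain ⟨b, hb⟩ := hAc
  apply edgeConn_gremban_le S {p : V × Bool | p.1 ∈ A} ⟨(a, true), ha⟩
    ⟨(b, true), by simpa using hb⟩
  rintro f ⟨hfe, x, y, rfl, hx, hy⟩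
  have hadj : S.G.Adj x.1 y.1 := ((SimpleGraph.mem_edgeSet _).1 hfe).1
  rw [Sym2.map_pair_eq]
  exact ⟨(SimpleGraph.mem_edgeSet _).2 hadj, x.1, y.1, rfl, hx, hy⟩

lemma boundB [Fintype V] [Nonempty V] (S : SignedGraph V) (θ : V → ℤ)
    (hθ : ∀ v, θ v = 1 ∨ θ v = -1) :
    edgeConn S.gremban ≤ 2 * (frustEdges S θ).ncard := by
  set A' : Set (V × Bool) := {p | θ p.1 = if p.2 then 1 else -1} with hA'
  have hAne : A'.Nonempty := by
    obtain ⟨w⟩ := ‹Nonempty V›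
    rcases hθ w with h | h
    · exact ⟨(w, true), by simp [hA', h]⟩
    · exact ⟨(w, false), by simp [hA', h]⟩
  have hAcne : A'ᶜ.Nonempty := by
    obtain ⟨w⟩ := ‹Nonempty V›
    rcases hθ w with h | h
    · exact ⟨(w, false), by simp [hA', h]⟩
    · exact ⟨(w, true), by simp [hA', h]⟩
  apply edgeConn_gremban_le S A' hAne hAcne
  rintro f ⟨hfe, x, y, rfl, hx, hy⟩
  obtain ⟨u, a⟩ := x
  obtain ⟨v, b⟩ := y
  obtain ⟨hadj, hsig⟩ := (SimpleGraph.mem_edgeSet _).1 hfe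
  rw [Sym2.map_pair_eq]
  refine ⟨(SimpleGraph.mem_edgeSet _).2 hadj, u, v, rfl, ?_⟩
  simp only [hA', Set.mem_setOf_eq] at hx
  simp only [hA', Set.mem_compl_iff, Set.mem_setOf_eq] at hy
  rcases hθ v with h | h <;> rcases hθ u with h' | h' <;>
    rcases S.sign_pm u v hadj with hs | hs <;> cases a <;> cases b <;> simp_all

end Aux

/-- The edge connectivity of the Gremban expansion of a signed graph `G` is at most
twice the minimum of the edge connectivity and the frustration index of `G`. -/
theorem gremban_edgeConn_le {V : Type*} [Fintype V] (S : SignedGraph V) :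
    edgeConn S.gremban ≤ 2 * min (edgeConn S.G) (frustIndex S) := by
  rcases isEmpty_or_nonempty V with hV | hV
  · have hempty : {n | ∃ A : Set (V × Bool), A.Nonempty ∧ Aᶜ.Nonempty ∧
        (cutEdges S.gremban A Aᶜ).ncard = n} = ∅ := by
      ext n
      simp only [Set.mem_setOf_eq, Set.mem_empty_iff_false, iff_false]
      rintro ⟨A, ⟨x, -⟩, -⟩
      exact hV.elim x.1
    have h0 : edgeConn S.gremban = 0 := by
      rw [edgeConn, hempty, Nat.sInf_empty]
    simp [h0]
  · have hfrNe : {n | ∃ θ : V → ℤ, (∀ v, θ v = 1 ∨ θ v = -1) ∧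
        (frustEdges S θ).ncard = n}.Nonempty :=
      ⟨(frustEdges S (fun _ => (1 : ℤ))).ncard, ⟨fun _ => (1 : ℤ), fun _ => Or.inl rfl, rfl⟩⟩
    obtain ⟨θ, hθ, hcard⟩ := Nat.sInf_mem hfrNe
    have hB : edgeConn S.gremban ≤ 2 * frustIndex S := by
      rw [frustIndex, ← hcard]
      exact boundB S θ hθ
    have hA : edgeConn S.gremban ≤ 2 * edgeConn S.G := by
      by_cases hG : {n | ∃ A : Set V, A.Nonempty ∧ Aᶜ.Nonempty ∧
          (cutEdges S.G A Aᶜ).ncard = n}.Nonempty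
      · obtain ⟨A, hA1, hA2, hc⟩ := Nat.sInf_mem hG
        have h2 : edgeConn S.G = (cutEdges S.G A Aᶜ).ncard := hc.symm
        rw [h2]
        exact boundA S A hA1 hA2
      · have hsub : ∀ u v : V, u = v := by
          intro u v
          by_contra hne
          exact hG ⟨_, {u}, ⟨u, rfl⟩, ⟨v, fun h => hne (Set.mem_singleton_iff.1 h).symm⟩, rfl⟩
        have hedge : S.G.edgeSet = ∅ := by
          ext e
          simp only [Set.mem_empty_iff_false, iff_false]
          induction e using Sym2.ind with
          | _ u v =>
            intro he
            have h3 := (SimpleGraph.mem_edgeSet _).1 he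
            rw [hsub u v] at h3
            exact S.G.irrefl h3
        have hfr0 : frustIndex S = 0 := by
          refine Nat.le_zero.1 (Nat.sInf_le ⟨fun _ => (1 : ℤ), fun _ => Or.inl rfl, ?_⟩)
          have : frustEdges S (fun _ => (1 : ℤ)) = ∅ := by
            ext e
            simp only [frustEdges, Set.mem_setOf_eq, Set.mem_empty_iff_false, iff_false]
            rintro ⟨he, -⟩
            rw [hedge] at he
            exact he
          simp [this]
        rw [hfr0, Nat.mul_zero] at hB
        exact hB.trans (Nat.zero_le _)
    rcases le_total (edgeConn S.G) (frustIndex S) with h | h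
    · rw [min_eq_left h]; exact hA
    · rw [min_eq_right h]; exact hB
end

section
/- Let G be a balanced signed graph with signed adjacency matrix A, and let 𝒜 be the adjacency matrix of its Gremban expansion. Then the spectrum of 𝒜 equals the spectrum of A with every multiplicity doubled: spec(𝒜) = spec(A) ∪ spec(A) as multisets. -/
open SignedGraph

namespace SignedGraph

variable {V : Type*} [Fintype V] [DecidableEq V]

open Classical in
/-- The signed adjacency matrix of a signed graph. -/
noncomputable def adjMat (S : SignedGraph V) : Matrix V V ℝ :=
  fun u v => if S.G.Adj u v then (S.sign u v : ℝ) else 0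

/-- The positive part `A⁺ = max(A, 0)` of the signed adjacency matrix. -/
noncomputable def adjPos (S : SignedGraph V) : Matrix V V ℝ :=
  fun u v => max (S.adjMat u v) 0

/-- The negative part `A⁻ = max(−A, 0)` of the signed adjacency matrix. -/
noncomputable def adjNeg (S : SignedGraph V) : Matrix V V ℝ :=
  fun u v => max (-S.adjMat u v) 0

/-- The Gremban adjacency matrix `𝒜 = [[A⁺, A⁻],[A⁻, A⁺]]`, which is the adjacency
matrix of the Gremban expansion. -/
noncomputable def grembanAdj (S : SignedGraph V) : Matrix (V ⊕ V) (V ⊕ V) ℝ :=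
  Matrix.fromBlocks (S.adjPos) (S.adjNeg) (S.adjNeg) (S.adjPos)

/-- A signed graph is balanced if some switching function `θ : V → {±1}` makes all edge
signs positive. -/
def BalancedSw (S : SignedGraph V) : Prop :=
  ∃ θ : V → ℤ, (∀ v, θ v = 1 ∨ θ v = -1) ∧
    ∀ u v, S.G.Adj u v → θ u * θ v * S.sign u v = 1

end SignedGraph

open Polynomial Matrix in
lemma charpoly_conj_aux {n : Type*} [Fintype n] [DecidableEq n] {R : Type*} [CommRing R]
    (P Q M : Matrix n n R) (hPQ : P * Q = 1) : (P * M * Q).charpoly = M.charpoly := by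
  have h1 : P.map C * Q.map C = 1 := by
    rw [← Matrix.map_mul, hPQ, Matrix.map_one _ (map_zero _) (map_one _)]
  have hch : charmatrix (P * M * Q) = P.map C * charmatrix M * Q.map C := by
    rw [charmatrix, charmatrix]
    simp only [RingHom.mapMatrix_apply]
    rw [Matrix.mul_sub, Matrix.sub_mul]
    congr 1
    · have hc := (Matrix.scalar_commute (X : R[X]) (fun r => Commute.all _ _) (P.map C)).eq
      rw [← hc, mul_assoc, h1, mul_one]
    · rw [Matrix.map_mul, Matrix.map_mul]
  have h2 : (P.map C).det * (Q.map C).det = 1 := by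
    rw [← Matrix.det_mul, h1, Matrix.det_one]
  rw [Matrix.charpoly, Matrix.charpoly, hch, Matrix.det_mul, Matrix.det_mul,
    mul_comm ((P.map C).det), mul_assoc, h2, mul_one]

/-- For a balanced signed graph `G` with signed adjacency matrix `A` and Gremban
adjacency matrix `𝒜`, the spectrum of `𝒜` equals the spectrum of `A` with every
multiplicity doubled: the characteristic polynomial of `𝒜` is the square of that
of `A`. -/
theorem balanced_gremban_adj_spectrum {V : Type*} [Fintype V] [DecidableEq V]
    (S : SignedGraph V) (hbal : S.BalancedSw) :
    (S.grembanAdj).charpoly = (S.adjMat).charpoly ^ 2 := by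
  classical
  obtain ⟨θ, hθ, hsw⟩ := hbal
  set A := S.adjMat with hA
  set B := S.adjPos with hB
  set Cm := S.adjNeg with hCm
  -- B - Cm = A and B + Cm = |A| entrywise
  have hsub : B - Cm = A := by
    ext u v
    simp only [hB, hCm, SignedGraph.adjPos, SignedGraph.adjNeg, Matrix.sub_apply]
    exact max_zero_sub_max_neg_zero_eq_self _
  -- the block similarity: charpoly of the Gremban matrix
  have hblock : (S.grembanAdj).charpoly = (B + Cm).charpoly * (B - Cm).charpoly := by
    set h : Matrix V V ℝ := (2⁻¹ : ℝ) • 1 with hh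
    set P : Matrix (V ⊕ V) (V ⊕ V) ℝ := Matrix.fromBlocks 1 1 1 (-1) with hP
    set Q : Matrix (V ⊕ V) (V ⊕ V) ℝ := Matrix.fromBlocks h h h (-h) with hQ
    have hhh : h + h = 1 := by
      rw [hh, ← two_smul ℝ, smul_smul]; norm_num
    have hPQ : P * Q = 1 := by
      rw [hP, hQ, Matrix.fromBlocks_multiply]
      simp only [Matrix.one_mul, Matrix.neg_mul, Matrix.mul_neg, neg_neg, add_neg_cancel, hhh]
      exact Matrix.fromBlocks_one
    have key : P * S.grembanAdj * Q = Matrix.fromBlocks (B + Cm) 0 0 (B - Cm) := by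
      rw [SignedGraph.grembanAdj, ← hB, ← hCm, hP, hQ, Matrix.fromBlocks_multiply,
        Matrix.fromBlocks_multiply, hh]
      simp only [Matrix.one_mul, Matrix.neg_mul, Matrix.mul_neg, Matrix.mul_smul, Matrix.mul_one]
      refine Matrix.fromBlocks_inj.mpr ⟨?_, ?_, ?_, ?_⟩ <;> module
    rw [← charpoly_conj_aux P Q _ hPQ, key, Matrix.charpoly_fromBlocks_zero₂₁]
  -- the switching similarity: charpoly (B + Cm) = charpoly A
  have habs : (B + Cm).charpoly = A.charpoly := by
    set D : Matrix V V ℝ := Matrix.diagonal (fun v => (θ v : ℝ)) with hD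
    have hDD : D * D = 1 := by
      rw [hD, Matrix.diagonal_mul_diagonal]
      convert Matrix.diagonal_one using 2
      ext v
      rcases hθ v with h1 | h1 <;> simp [h1]
    have hconj : D * (B + Cm) * D = A := by
      ext u v
      rw [hD, Matrix.mul_diagonal, Matrix.diagonal_mul]
      have hBC : (B + Cm) u v = |A u v| := by
        simp only [hB, hCm, SignedGraph.adjPos, SignedGraph.adjNeg, Matrix.add_apply]
        exact max_zero_add_max_neg_zero_eq_abs_self _
      rw [hBC]
      by_cases hadj : S.G.Adj u v
      · have hs := hsw u v hadj
        have hAuv : A u v = (S.sign u v : ℝ) := by simp [hA, SignedGraph.adjMat, hadj]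
        rcases S.sign_pm u v hadj with h1 | h1 <;>
          rcases hθ u with h2 | h2 <;> rcases hθ v with h3 | h3 <;>
            simp [h1, h2, h3, hAuv] at hs ⊢
      · have hAuv : A u v = 0 := by simp [hA, SignedGraph.adjMat, hadj]
        simp [hAuv]
    rw [← hconj, charpoly_conj_aux D D _ hDD]
  rw [hblock, hsub, habs, sq]
end

section
/- Let G be a signed graph with signed adjacency matrix A, unsigned adjacency matrix Ā = |A|, and Gremban adjacency matrix 𝒜. Then the characteristic polynomial of 𝒜 factors as χ_𝒜(λ) = χ_Ā(λ)·χ_A(λ); consequently det(𝒜) = det(Ā)·det(A) and the spectral radius satisfies ρ(𝒜) = max{ρ(Ā), ρ(A)}. -/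
open SignedGraph

section AuxGremban
open Matrix Polynomial

variable {n : Type*} [Fintype n] [DecidableEq n]

lemma aux_eval_charpoly (M : Matrix n n ℝ) (k : ℝ) :
    M.charpoly.eval k = ((algebraMap ℝ (Matrix n n ℝ) k) - M).det := by
  have h : ((charmatrix M).map (evalRingHom k)) = (algebraMap ℝ (Matrix n n ℝ) k) - M := by
    ext i j
    by_cases hij : i = j
    · subst hij
      simp [charmatrix_apply_eq, Matrix.algebraMap_matrix_apply]
    · simp [charmatrix_apply_ne _ _ _ hij, Matrix.algebraMap_matrix_apply, hij]
  rw [Matrix.charpoly, ← h]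
  exact (RingHom.map_det (evalRingHom k) (charmatrix M))

lemma aux_mem_spectrum_iff (M : Matrix n n ℝ) (k : ℝ) :
    k ∈ spectrum ℝ M ↔ M.charpoly.eval k = 0 := by
  rw [spectrum.mem_iff, Matrix.isUnit_iff_isUnit_det, isUnit_iff_ne_zero, not_ne_iff,
    aux_eval_charpoly]

variable {V : Type*} [Fintype V] [DecidableEq V]

lemma gremban_key (S : SignedGraph V) :
    (Matrix.fromBlocks 1 1 1 (-1) : Matrix (V ⊕ V) (V ⊕ V) ℝ) * S.grembanAdj =
      (Matrix.fromBlocks (S.adjPos + S.adjNeg) 0 0 (S.adjMat)) *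
        (Matrix.fromBlocks 1 1 1 (-1) : Matrix (V ⊕ V) (V ⊕ V) ℝ) := by
  have hPN : S.adjPos - S.adjNeg = S.adjMat := by
    ext u v
    simpa [SignedGraph.adjPos, SignedGraph.adjNeg] using
      max_zero_sub_max_neg_zero_eq_self (S.adjMat u v)
  rw [SignedGraph.grembanAdj, Matrix.fromBlocks_multiply, Matrix.fromBlocks_multiply,
    Matrix.fromBlocks_inj]
  refine ⟨by simp, by simp [add_comm], ?_, ?_⟩
  · simp only [← hPN]
    simp only [one_mul, mul_one, neg_mul, mul_neg, zero_mul, mul_zero, add_zero, zero_add]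
    abel
  · simp only [← hPN]
    simp only [one_mul, mul_one, neg_mul, mul_neg, zero_mul, mul_zero, add_zero, zero_add]
    abel

lemma detE_ne_zero : (Matrix.fromBlocks 1 1 1 (-1) : Matrix (V ⊕ V) (V ⊕ V) ℝ).det ≠ 0 := by
  set E : Matrix (V ⊕ V) (V ⊕ V) ℝ := Matrix.fromBlocks 1 1 1 (-1) with hE
  have hEE : E * E = Matrix.fromBlocks ((2 : ℝ) • 1) 0 0 ((2 : ℝ) • (1 : Matrix V V ℝ)) := by
    rw [hE, Matrix.fromBlocks_multiply, Matrix.fromBlocks_inj]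
    refine ⟨by simp [two_smul], by simp, by simp, by simp [two_smul]⟩
  have h2 : (E * E).det ≠ 0 := by
    rw [hEE, Matrix.det_fromBlocks_zero₂₁, Matrix.det_smul, Matrix.det_one, mul_one]
    positivity
  intro h
  rw [Matrix.det_mul, h, zero_mul] at h2
  exact h2 rfl

end AuxGremban

/-- For a signed graph `G` with signed adjacency matrix `A`, unsigned adjacency matrix
`Ā = A⁺ + A⁻` and Gremban adjacency matrix `𝒜`, the characteristic polynomial of `𝒜`
factors as `χ_𝒜 = χ_Ā · χ_A`; consequently `det 𝒜 = det Ā · det A` and the spectral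
radius satisfies `ρ(𝒜) = max{ρ(Ā), ρ(A)}`. -/
theorem gremban_adj_charpoly_det_specRadius {V : Type*} [Fintype V] [DecidableEq V]
    (S : SignedGraph V) :
    (S.grembanAdj).charpoly = (S.adjPos + S.adjNeg).charpoly * (S.adjMat).charpoly ∧
    (S.grembanAdj).det = (S.adjPos + S.adjNeg).det * (S.adjMat).det ∧
    spectralRadius ℝ (S.grembanAdj) =
      max (spectralRadius ℝ (S.adjPos + S.adjNeg)) (spectralRadius ℝ (S.adjMat)) := by
  classical
  open Matrix Polynomial in
  set E : Matrix (V ⊕ V) (V ⊕ V) ℝ := Matrix.fromBlocks 1 1 1 (-1) with hEdef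
  set D : Matrix (V ⊕ V) (V ⊕ V) ℝ :=
    Matrix.fromBlocks (S.adjPos + S.adjNeg) 0 0 (S.adjMat) with hDdef
  have hEA : E * S.grembanAdj = D * E := gremban_key S
  have hdetE : E.det ≠ 0 := detE_ne_zero
  have hcharD : D.charpoly = (S.adjPos + S.adjNeg).charpoly * (S.adjMat).charpoly := by
    rw [hDdef, Matrix.charpoly_fromBlocks_zero₂₁]
  have hcomm : Commute (Matrix.scalar (V ⊕ V) (X : Polynomial ℝ))
      ((Polynomial.C : ℝ →+* Polynomial ℝ).mapMatrix E) :=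
    Matrix.scalar_commute _ (fun r' => Commute.all _ _) _
  have key : (Polynomial.C : ℝ →+* Polynomial ℝ).mapMatrix E * Matrix.charmatrix S.grembanAdj
      = Matrix.charmatrix D * (Polynomial.C : ℝ →+* Polynomial ℝ).mapMatrix E := by
    have hmm : ∀ (M N : Matrix (V ⊕ V) (V ⊕ V) ℝ),
        (Polynomial.C : ℝ →+* Polynomial ℝ).mapMatrix (M * N)
          = (Polynomial.C : ℝ →+* Polynomial ℝ).mapMatrix M
            * (Polynomial.C : ℝ →+* Polynomial ℝ).mapMatrix N :=
      fun M N => RingHom.map_mul _ M N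
    rw [Matrix.charmatrix, Matrix.charmatrix, Matrix.mul_sub, Matrix.sub_mul,
      ← hmm, ← hmm, hEA, hcomm.eq]
  have hdet' := congrArg Matrix.det key
  rw [Matrix.det_mul, Matrix.det_mul, ← RingHom.map_det] at hdet'
  have hCdetE : (Polynomial.C (E.det) : Polynomial ℝ) ≠ 0 := by
    simpa using hdetE
  have hchar : (S.grembanAdj).charpoly
      = (S.adjPos + S.adjNeg).charpoly * (S.adjMat).charpoly := by
    rw [← hcharD]
    exact mul_left_cancel₀ hCdetE (hdet'.trans (mul_comm _ _))
  refine ⟨hchar, ?_, ?_⟩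
  · have hd := congrArg Matrix.det hEA
    rw [Matrix.det_mul, Matrix.det_mul] at hd
    have : (S.grembanAdj).det = D.det := mul_left_cancel₀ hdetE (hd.trans (mul_comm _ _))
    rw [this, hDdef, Matrix.det_fromBlocks_zero₂₁]
  · have hsp : spectrum ℝ S.grembanAdj
        = spectrum ℝ (S.adjPos + S.adjNeg) ∪ spectrum ℝ (S.adjMat) := by
      ext k
      simp only [aux_mem_spectrum_iff, Set.mem_union, hchar, Polynomial.eval_mul, mul_eq_zero]
    simp only [spectralRadius, hsp, iSup_union]
end

section
/- Let G be a signed graph with k connected components, of which ℓ are structurally balanced, and let ℒ be the Laplacian of its Gremban expansion. Then the kernel of ℒ has dimension k + ℓ. -/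
namespace SignedGraph

variable {V : Type*} (S : SignedGraph V)

def fstHom : S.gremban →g S.G := ⟨Prod.fst, fun h => h.1⟩

def etaHom : S.gremban →g S.gremban :=
  ⟨fun x => (x.1, !x.2), by
    rintro ⟨u, a⟩ ⟨w, b⟩ ⟨h1, h2⟩
    exact ⟨h1, by simpa using h2⟩⟩

lemma reachable_eta {x y : V × Bool} (h : S.gremban.Reachable x y) :
    S.gremban.Reachable (x.1, !x.2) (y.1, !y.2) := h.map S.etaHom

lemma reachable_fst {x y : V × Bool} (h : S.gremban.Reachable x y) :
    S.G.Reachable x.1 y.1 := h.map S.fstHom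

lemma exists_lift {u w : V} (h : S.G.Reachable u w) (a : Bool) :
    ∃ b, S.gremban.Reachable (u, a) (w, b) := by
  obtain ⟨p⟩ := h
  induction p generalizing a with
  | nil => exact ⟨a, .refl _⟩
  | @cons u z w h p ih =>
    by_cases hs : S.sign u z = 1
    · have hadj : S.gremban.Adj (u, a) (z, a) := ⟨h, by simp [hs]⟩
      obtain ⟨b, hb⟩ := ih a
      exact ⟨b, hadj.reachable.trans hb⟩
    · have hadj : S.gremban.Adj (u, a) (z, !a) := ⟨h, by simp [hs]⟩
      obtain ⟨b, hb⟩ := ih (!a)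
      exact ⟨b, hadj.reachable.trans hb⟩

lemma sign_step {a b : Bool} {t1 t2 s : ℤ} (h1 : t1 = 1 ∨ t1 = -1)
    (h2 : t2 = 1 ∨ t2 = -1) (h3 : s = 1 ∨ s = -1) (hiff : (a = b) ↔ s = 1)
    (hval : t1 * t2 * s = 1) :
    t1 * (if a then 1 else -1) = t2 * (if b then 1 else -1) := by
  rcases h1 with rfl | rfl <;> rcases h2 with rfl | rfl <;> rcases h3 with rfl | rfl <;>
    rcases a <;> rcases b <;> simp_all

lemma not_reachable_of_balanced {v : V}
    (hb : ∃ θ : V → ℤ, (∀ v, θ v = 1 ∨ θ v = -1) ∧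
      ∀ u w, S.G.Adj u w → S.G.connectedComponentMk u = S.G.connectedComponentMk v →
        θ u * θ w * S.sign u w = 1) :
    ¬ S.gremban.Reachable (v, true) (v, false) := by
  obtain ⟨θ, hθ, hedge⟩ := hb
  intro hr
  have key : ∀ (x y : V × Bool) (p : S.gremban.Walk x y),
      S.G.connectedComponentMk x.1 = S.G.connectedComponentMk v →
      θ x.1 * (if x.2 then 1 else -1) = θ y.1 * (if y.2 then 1 else -1) := by
    intro x y p
    induction p with
    | nil => intro _; rfl
    | @cons x z y h q ih =>
      intro hc
      have hcz : S.G.connectedComponentMk z.1 = S.G.connectedComponentMk v := by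
        rw [← hc, SimpleGraph.ConnectedComponent.eq]
        exact h.1.symm.reachable
      have step : θ x.1 * (if x.2 then 1 else -1) = θ z.1 * (if z.2 then 1 else -1) :=
        sign_step (hθ x.1) (hθ z.1) (S.sign_pm x.1 z.1 h.1) h.2
          (hedge x.1 z.1 h.1 hc)
      rw [step]; exact ih hcz
  obtain ⟨p⟩ := hr
  have := key _ _ p rfl
  rcases hθ v with h1 | h1 <;> simp_all

lemma balanced_of_not_reachable {v : V}
    (h : ¬ S.gremban.Reachable (v, true) (v, false)) :
    ∃ θ : V → ℤ, (∀ v, θ v = 1 ∨ θ v = -1) ∧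
      ∀ u w, S.G.Adj u w → S.G.connectedComponentMk u = S.G.connectedComponentMk v →
        θ u * θ w * S.sign u w = 1 := by
  classical
  refine ⟨fun u => if S.gremban.Reachable (v, true) (u, true) then 1 else -1,
    fun u => by by_cases hu : S.gremban.Reachable (v, true) (u, true) <;> simp [hu], ?_⟩
  intro u w hadj hc
  -- dichotomy
  have notboth : ∀ z : V, ¬ (S.gremban.Reachable (v, true) (z, true) ∧
      S.gremban.Reachable (v, true) (z, false)) := by
    rintro z ⟨h1, h2⟩
    have h3 := S.reachable_eta h2
    simp only [Bool.not_true, Bool.not_false] at h3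
    exact h (h1.trans h3.symm)
  have exone : ∀ z : V, S.G.connectedComponentMk z = S.G.connectedComponentMk v →
      ∃ b : Bool, S.gremban.Reachable (v, true) (z, b) ∧
        ((if S.gremban.Reachable (v, true) (z, true) then (1:ℤ) else -1)
          = if b then 1 else -1) := by
    intro z hz
    have hr : S.G.Reachable v z := (SimpleGraph.ConnectedComponent.eq.mp hz).symm
    obtain ⟨b, hb⟩ := S.exists_lift hr true
    refine ⟨b, hb, ?_⟩
    rcases hbv : b with _ | _
    · subst hbv
      have : ¬ S.gremban.Reachable (v, true) (z, true) := fun h1 => notboth z ⟨h1, hb⟩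
      simp [this]
    · subst hbv
      simp [hb]
  have hcw : S.G.connectedComponentMk w = S.G.connectedComponentMk v := by
    rw [← hc, SimpleGraph.ConnectedComponent.eq]
    exact hadj.symm.reachable
  obtain ⟨bu, hbu, hvu⟩ := exone u hc
  set bw : Bool := if S.sign u w = 1 then bu else !bu with hbw
  have hstep : S.gremban.Adj (u, bu) (w, bw) := by
    refine ⟨hadj, ?_⟩
    by_cases hs : S.sign u w = 1 <;> simp [hbw, hs]
  have hrw : S.gremban.Reachable (v, true) (w, bw) := hbu.trans hstep.reachable
  obtain ⟨bw', hbw', hvw⟩ := exone w hcw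
  have hbweq : bw' = bw := by
    by_contra hne
    have : bw' = !bw := by rcases bw' <;> rcases bw <;> simp_all
    subst this
    rcases bw with _ | _
    · exact notboth w ⟨hbw', hrw⟩
    · exact notboth w ⟨hrw, hbw'⟩
  show (if S.gremban.Reachable (v, true) (u, true) then (1:ℤ) else -1) *
      (if S.gremban.Reachable (v, true) (w, true) then (1:ℤ) else -1) * S.sign u w = 1
  rw [hvu, hvw, hbweq, hbw]
  rcases S.sign_pm u w hadj with hs | hs <;> rcases bu with _ | _ <;> simp [hs]

end SignedGraph

open SignedGraph

namespace SignedGraph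

variable {V : Type*} [Fintype V] [DecidableEq V]

/-- The degree matrix `K` of a signed graph: the diagonal matrix of (unsigned)
degrees, i.e. row sums of `Ā = A⁺ + A⁻`. -/
noncomputable def degMat (S : SignedGraph V) : Matrix V V ℝ :=
  Matrix.diagonal fun v => ∑ w, (S.adjPos v w + S.adjNeg v w)

/-- The signed Laplacian `L = K − A⁺ + A⁻`. -/
noncomputable def signedLap (S : SignedGraph V) : Matrix V V ℝ :=
  S.degMat - S.adjPos + S.adjNeg

/-- The unsigned Laplacian `L̄ = K − A⁺ − A⁻`. -/
noncomputable def unsignedLap (S : SignedGraph V) : Matrix V V ℝ :=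
  S.degMat - S.adjPos - S.adjNeg

/-- The Gremban Laplacian `ℒ = [[K − A⁺, −A⁻],[−A⁻, K − A⁺]]`, the Laplacian matrix of
the Gremban expansion. -/
noncomputable def grembanLap (S : SignedGraph V) : Matrix (V ⊕ V) (V ⊕ V) ℝ :=
  Matrix.fromBlocks (S.degMat - S.adjPos) (-S.adjNeg) (-S.adjNeg) (S.degMat - S.adjPos)

end SignedGraph

/-- A connected component `c` of a signed graph is structurally balanced if some
switching function `θ : V → {±1}` makes all edges within `c` positive. -/
def SignedGraph.compBalanced {V : Type*} (S : SignedGraph V)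
    (c : S.G.ConnectedComponent) : Prop :=
  ∃ θ : V → ℤ, (∀ v, θ v = 1 ∨ θ v = -1) ∧
    ∀ u v, S.G.Adj u v → S.G.connectedComponentMk u = c →
      θ u * θ v * S.sign u v = 1

namespace SignedGraph
variable {V : Type*} [Fintype V] [DecidableEq V] (S : SignedGraph V)

lemma adjPos_eq (u w : V) [Decidable (S.G.Adj u w ∧ S.sign u w = 1)] :
    S.adjPos u w = if S.G.Adj u w ∧ S.sign u w = 1 then 1 else 0 := by
  simp only [adjPos, adjMat]
  by_cases hadj : S.G.Adj u w
  · rcases S.sign_pm u w hadj with hs | hs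
    · rw [if_pos hadj, if_pos ⟨hadj, hs⟩, hs]; norm_num
    · rw [if_pos hadj, if_neg (fun hh : _ ∧ _ => by omega), hs]; norm_num
  · rw [if_neg hadj, if_neg (fun hh => hadj hh.1)]; norm_num

lemma adjNeg_eq (u w : V) [Decidable (S.G.Adj u w ∧ S.sign u w = -1)] :
    S.adjNeg u w = if S.G.Adj u w ∧ S.sign u w = -1 then 1 else 0 := by
  simp only [adjNeg, adjMat]
  by_cases hadj : S.G.Adj u w
  · rcases S.sign_pm u w hadj with hs | hs
    · rw [if_pos hadj, if_neg (fun hh : _ ∧ _ => by omega), hs]; norm_num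
    · rw [if_pos hadj, if_pos ⟨hadj, hs⟩, hs]; norm_num
  · rw [if_neg hadj, if_neg (fun hh => hadj hh.1)]; norm_num

lemma gremban_adj_iff (u w : V) (a b : Bool) :
    S.gremban.Adj (u, a) (w, b) ↔ (S.G.Adj u w ∧ ((a = b) ↔ S.sign u w = 1)) := Iff.rfl

lemma gremban_degree [DecidableRel S.gremban.Adj] (v : V) (a : Bool) :
    (S.gremban.degree (v, a) : ℝ) = ∑ w, (S.adjPos v w + S.adjNeg v w) := by
  classical
  rw [SimpleGraph.degree_eq_sum_if_adj, Fintype.sum_prod_type]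
  refine Finset.sum_congr rfl fun w _ => ?_
  rw [Fintype.sum_bool, S.adjPos_eq v w, S.adjNeg_eq v w]
  by_cases hadj : S.G.Adj v w
  · rcases S.sign_pm v w hadj with hs | hs <;> rcases a <;>
      simp [gremban_adj_iff, hadj, hs]
  · simp [gremban_adj_iff, hadj]

end SignedGraph

namespace SignedGraph

def sumEquiv {V : Type*} : V ⊕ V ≃ V × Bool where
  toFun := Sum.elim (fun v => (v, true)) (fun v => (v, false))
  invFun y := if y.2 then .inl y.1 else .inr y.1
  left_inv := by rintro (v | v) <;> simp
  right_inv := by rintro ⟨v, _ | _⟩ <;> simp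

@[simp] lemma sumEquiv_inl {V : Type*} (v : V) : sumEquiv (Sum.inl v) = (v, true) := rfl
@[simp] lemma sumEquiv_inr {V : Type*} (v : V) : sumEquiv (Sum.inr v) = (v, false) := rfl

variable {V : Type*} [Fintype V] [DecidableEq V] (S : SignedGraph V)

lemma adjPos_entry [DecidableRel S.gremban.Adj] (u w : V) (b : Bool) :
    S.adjPos u w = if S.gremban.Adj (u, b) (w, b) then 1 else 0 := by
  classical
  rw [S.adjPos_eq]
  by_cases h : S.G.Adj u w ∧ S.sign u w = 1
  · rw [if_pos h, if_pos ((S.gremban_adj_iff u w b b).mpr ⟨h.1, by simp [h.2]⟩)]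
  · rw [if_neg h, if_neg (fun hh => h ⟨hh.1, ((S.gremban_adj_iff u w b b).mp hh).2.mp rfl⟩)]

lemma adjNeg_entry [DecidableRel S.gremban.Adj] (u w : V) (b : Bool) :
    S.adjNeg u w = if S.gremban.Adj (u, b) (w, !b) then 1 else 0 := by
  classical
  rw [S.adjNeg_eq]
  by_cases h : S.G.Adj u w ∧ S.sign u w = -1
  · rw [if_pos h, if_pos ((S.gremban_adj_iff u w b (!b)).mpr ⟨h.1, by
      constructor
      · intro hb; exact absurd hb (by rcases b <;> simp)
      · intro hs; omega⟩)]
  · rw [if_neg h, if_neg (fun hh => by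
      obtain ⟨h1, h2⟩ := (S.gremban_adj_iff u w b (!b)).mp hh
      rcases S.sign_pm u w h1 with hs | hs
      · exact absurd (h2.mpr hs) (by rcases b <;> simp)
      · exact h ⟨h1, hs⟩)]

lemma grembanLap_eq [DecidableRel S.gremban.Adj] :
    S.grembanLap = (S.gremban.lapMatrix ℝ).submatrix sumEquiv sumEquiv := by
  classical
  have hdiag : ∀ (u w : V) (b : Bool),
      S.degMat u w = (S.gremban.degMatrix ℝ) (u, b) (w, b) := by
    intro u w b
    rw [degMat, SimpleGraph.degMatrix, Matrix.diagonal_apply, Matrix.diagonal_apply]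
    by_cases h : u = w
    · subst h; rw [if_pos rfl, if_pos rfl, ← S.gremban_degree u b]
    · rw [if_neg h, if_neg (by simp [h])]
  have hoffdiag : ∀ (u w : V) (b : Bool),
      (0 : ℝ) = (S.gremban.degMatrix ℝ) (u, b) (w, !b) := by
    intro u w b
    rw [SimpleGraph.degMatrix, Matrix.diagonal_apply, if_neg (by rcases b <;> simp)]
  ext i j
  rcases i with u | u <;> rcases j with w | w <;>
    simp only [grembanLap, Matrix.fromBlocks_apply₁₁, Matrix.fromBlocks_apply₁₂,
      Matrix.fromBlocks_apply₂₁, Matrix.fromBlocks_apply₂₂, Matrix.submatrix_apply,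
      sumEquiv_inl, sumEquiv_inr, SimpleGraph.lapMatrix, Matrix.sub_apply,
      Matrix.neg_apply, SimpleGraph.adjMatrix_apply]
  · rw [← hdiag u w true, ← S.adjPos_entry u w true]
  · rw [show ((w : V), false) = (w, !true) from rfl, ← hoffdiag u w true,
      ← S.adjNeg_entry u w true]; ring
  · rw [show ((w : V), true) = (w, !false) from rfl, ← hoffdiag u w false,
      ← S.adjNeg_entry u w false]; ring
  · rw [← hdiag u w false, ← S.adjPos_entry u w false]

end SignedGraph

theorem finrank_ker_reindex {k m : Type*} [Fintype k] [Fintype m] [DecidableEq k] [DecidableEq m]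
    (e : k ≃ m) (M : Matrix k k ℝ) :
    Module.finrank ℝ (LinearMap.ker (Matrix.reindex e e M).mulVecLin) =
      Module.finrank ℝ (LinearMap.ker M.mulVecLin) := by
  rw [Matrix.mulVecLin_reindex, LinearMap.ker_comp, LinearEquiv.ker, ← LinearMap.ker,
    LinearMap.ker_comp, Submodule.comap_equiv_eq_map_symm]
  exact LinearEquiv.finrank_map_eq _ _

open SimpleGraph Finset in
lemma SignedGraph.card_components {V : Type*} [Fintype V] [DecidableEq V] (S : SignedGraph V) :
    Nat.card S.gremban.ConnectedComponent =
      Nat.card S.G.ConnectedComponent +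
        {c : S.G.ConnectedComponent | S.compBalanced c}.ncard := by
  classical
  haveI : Fintype S.G.ConnectedComponent := Fintype.ofFinite _
  set π : S.gremban.ConnectedComponent → S.G.ConnectedComponent :=
    ConnectedComponent.map S.fstHom with hπ
  rw [Nat.card_eq_fintype_card, Nat.card_eq_fintype_card, ← Finset.card_univ,
    ← Finset.card_univ, Finset.card_eq_sum_card_fiberwise
      (f := π) (t := Finset.univ) (fun x _ => Finset.mem_univ _)]
  have fiber : ∀ c : S.G.ConnectedComponent,
      (Finset.univ.filter (fun d => π d = c)).card =
        if S.compBalanced c then 2 else 1 := by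
    intro c
    obtain ⟨v, rfl⟩ : ∃ v, S.G.connectedComponentMk v = c := c.exists_rep
    have hfib : Finset.univ.filter (fun d => π d = S.G.connectedComponentMk v) =
        {S.gremban.connectedComponentMk (v, true),
          S.gremban.connectedComponentMk (v, false)} := by
      ext d
      simp only [Finset.mem_filter, Finset.mem_univ, true_and, Finset.mem_insert,
        Finset.mem_singleton]
      constructor
      · intro hd
        obtain ⟨x, rfl⟩ : ∃ x, S.gremban.connectedComponentMk x = d := d.exists_rep
        rw [hπ, ConnectedComponent.map_mk] at hd
        have hr : S.G.Reachable x.1 v := ConnectedComponent.eq.mp hd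
        obtain ⟨b, hb⟩ := S.exists_lift hr x.2
        have : S.gremban.connectedComponentMk x = S.gremban.connectedComponentMk (v, b) :=
          ConnectedComponent.eq.mpr (by simpa using hb)
        rcases b <;> [right; left] <;> simpa using this
      · rintro (rfl | rfl) <;> rw [hπ, ConnectedComponent.map_mk] <;> rfl
    rw [hfib]
    by_cases hbal : S.compBalanced (S.G.connectedComponentMk v)
    · rw [if_pos hbal]
      have hne : S.gremban.connectedComponentMk (v, true) ≠
          S.gremban.connectedComponentMk (v, false) := by
        intro he
        exact S.not_reachable_of_balanced hbal (ConnectedComponent.eq.mp he)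
      rw [Finset.card_insert_of_notMem (by simpa using hne), Finset.card_singleton]
    · rw [if_neg hbal]
      have heq : S.gremban.connectedComponentMk (v, true) =
          S.gremban.connectedComponentMk (v, false) := by
        by_contra hne
        exact hbal (S.balanced_of_not_reachable
          (fun hr => hne (ConnectedComponent.eq.mpr hr)))
      rw [heq, Finset.insert_eq_self.mpr (Finset.mem_singleton_self _),
        Finset.card_singleton]
  calc ∑ c : S.G.ConnectedComponent, (Finset.univ.filter (fun d => π d = c)).card
      = ∑ c : S.G.ConnectedComponent, (1 + if S.compBalanced c then 1 else 0) := by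
        refine Finset.sum_congr rfl fun c _ => ?_
        rw [fiber c]
        by_cases h : S.compBalanced c <;> simp [h]
    _ = Finset.univ.card + {c : S.G.ConnectedComponent | S.compBalanced c}.ncard := by
        rw [Finset.sum_add_distrib, Finset.sum_const, Finset.sum_boole]
        congr 1
        · simp
        · rw [Set.ncard_eq_toFinset_card', Set.toFinset_setOf]
          simp

/-- If a signed graph has `k` connected components, `ℓ` of which are structurally
balanced, then the kernel of the Gremban Laplacian `ℒ` has dimension `k + ℓ`. -/
theorem gremban_laplacian_kernel_dim {V : Type*} [Fintype V] [DecidableEq V]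
    (S : SignedGraph V) :
    Module.finrank ℝ (LinearMap.ker (S.grembanLap).mulVecLin) =
      Nat.card S.G.ConnectedComponent +
        {c : S.G.ConnectedComponent | S.compBalanced c}.ncard := by
    classical
  rw [S.grembanLap_eq]
  have hre : (S.gremban.lapMatrix ℝ).submatrix (sumEquiv (V := V)) sumEquiv
      = Matrix.reindex sumEquiv.symm sumEquiv.symm (S.gremban.lapMatrix ℝ) := by
    rw [Matrix.reindex_apply]
    simp
  rw [hre, finrank_ker_reindex]
  have hml : (S.gremban.lapMatrix ℝ).mulVecLin = Matrix.toLin' (S.gremban.lapMatrix ℝ) := by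
    ext x
    simp [Matrix.mulVecLin_apply, Matrix.toLin'_apply]
  rw [hml, ← SimpleGraph.card_connectedComponent_eq_finrank_ker_toLin'_lapMatrix,
    ← Nat.card_eq_fintype_card, S.card_components]
end
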